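/- Let A = [[a,b],[c,d]] ∈ SL(2,Z) with b,c even and a,d odd, and suppose some coprime pair (x,y) satisfies (ax+by)y - (cx+dy)x = 0. Then a + d = 2 or a + d = -2. -/

import Mathlib

/-- If `A = [[a,b],[c,d]] ∈ SL(2,ℤ)` with `a`, `d` odd and `b`, `c` even, and some coprime
pair `(x, y)` satisfies `(ax+by)y - (cx+dy)x = 0`, then the trace `a + d` is `2` or `-2`. -/
theorem vanishing_intersection_forces_trace (a b c d x y : ℤ) (hdet : a * d - b * c = 1)
    (ha : Odd a) (hd : Odd d) (hb : Even b) (hc : Even c) (hxy : IsCoprime x y)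
    (h : (a * x + b * y) * y - (c * x + d * y) * x = 0) :
    a + d = 2 ∨ a + d = -2 := by
  -- find eigenvalue n with (a x + b y, c x + d y) = n (x, y)
  obtain ⟨n, hu, hv⟩ : ∃ n : ℤ, a * x + b * y = n * x ∧ c * x + d * y = n * y := by
    rcases eq_or_ne x 0 with hx | hx
    · have hy : y ≠ 0 := by
        rintro rfl
        simpa [hx] using hxy.ne_zero_or_ne_zero
      subst hx
      have hb0 : b * y = 0 := by
        have : (b * y) * y = 0 := by linarith [h]
        rcases mul_eq_zero.mp this with h' | h'
        · exact h'
        · exact absurd h' hy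
      exact ⟨d, by linarith, by ring⟩
    · have hdvd : x ∣ (a * x + b * y) := by
        have h1 : x ∣ (a * x + b * y) * y := ⟨c * x + d * y, by linarith⟩
        exact hxy.dvd_of_dvd_mul_right h1
      obtain ⟨n, hn⟩ := hdvd
      refine ⟨n, by linarith [hn], ?_⟩
      have : x * ((c * x + d * y)) = x * (n * y) := by
        linear_combination y * hn - h
      exact mul_left_cancel₀ hx this
  -- characteristic polynomial vanishes
  have he : (a - n) * (d - n) - b * c = 0 := by
    obtain ⟨p, q, hpq⟩ := hxy
    have ex : ((a - n) * (d - n) - b * c) * x = 0 := by linear_combination (d - n) * hu - b * hv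
    have ey : ((a - n) * (d - n) - b * c) * y = 0 := by linear_combination (a - n) * hv - c * hu
    linear_combination p * ex + q * ey - ((a - n) * (d - n) - b * c) * hpq
  have key : n * (a + d - n) = 1 := by linear_combination hdet - he
  have hunit : IsUnit n := IsUnit.of_mul_eq_one _ key
  rcases Int.isUnit_iff.mp hunit with rfl | rfl
  · left; linarith
  · right; linarith
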